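/- Let d ≥ 1, N ≥ 1, and let U, V be nonempty finite types (spaces of local hidden variables). Let p : Fin N → Fin N → ((ZMod d) × (ZMod d) × U × V → ℝ) be a family of probability distributions (nonnegative, summing to 1 for each (a,b)). Assume: (i) the (X,U,V)-marginal of p(a,b) does not depend on b; (ii) the (Y,U,V)-marginal of p(a,b) does not depend on a. Then for every a ∈ Fin N and every x ∈ ZMod d: (4/d)·(1/d)·Σ_{u ∈ U} |P_{XU}(x,u|a) − (1/d)·P_U(u)| ≤ I_N, where P_{XU}(·|a) is the (X,U)-marginal (independent of b by (i)), P_U is the U-marginal (independent of a and b), and I_N is the chained correlation quantity of the (X,Y)-marginals. The symmetric bound with Y, V, and b in place of X, U, and a also holds. -/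

import Mathlib

open Finset

/-- `E[val(X − Y)]` for a joint distribution `π` on `(ZMod d) × (ZMod d)`. -/
noncomputable def expValXsubY {d : ℕ} [NeZero d] (π : ZMod d × ZMod d → ℝ) : ℝ :=
  ∑ w : ZMod d × ZMod d, ((w.1 - w.2).val : ℝ) * π w

/-- `E[val(Y − X)]` for a joint distribution `π` on `(ZMod d) × (ZMod d)`. -/
noncomputable def expValYsubX {d : ℕ} [NeZero d] (π : ZMod d × ZMod d → ℝ) : ℝ :=
  ∑ w : ZMod d × ZMod d, ((w.2 - w.1).val : ℝ) * π w

/-- `E[val(Y − X − 1)]` for a joint distribution `π` on `(ZMod d) × (ZMod d)`. -/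
noncomputable def expValYsubXsubOne {d : ℕ} [NeZero d] (π : ZMod d × ZMod d → ℝ) : ℝ :=
  ∑ w : ZMod d × ZMod d, ((w.2 - w.1 - 1).val : ℝ) * π w

/-- The chained correlation quantity
`I_N := Σ_{i=1}^{N−1} ( E_{Q(i,i)}[val(X−Y)] + E_{Q(i+1,i)}[val(Y−X)] )
      + E_{Q(N,N)}[val(X−Y)] + E_{Q(1,N)}[val(Y−X−1)]`,
for a family `Q` of joint distributions on `(ZMod d) × (ZMod d)` indexed by settings
`a, b ∈ {1, …, N}` (represented by `Fin N`). -/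
noncomputable def chainedIN (d N : ℕ) [NeZero d] (hN : 0 < N)
    (Q : Fin N → Fin N → (ZMod d × ZMod d → ℝ)) : ℝ :=
  (∑ i ∈ (Finset.range (N - 1)).attach,
      (expValXsubY (Q ⟨i.1, by have := Finset.mem_range.mp i.2; omega⟩
                      ⟨i.1, by have := Finset.mem_range.mp i.2; omega⟩) +
       expValYsubX (Q ⟨i.1 + 1, by have := Finset.mem_range.mp i.2; omega⟩
                      ⟨i.1, by have := Finset.mem_range.mp i.2; omega⟩)))
    + expValXsubY (Q ⟨N - 1, by omega⟩ ⟨N - 1, by omega⟩)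
    + expValYsubXsubOne (Q ⟨0, hN⟩ ⟨N - 1, by omega⟩)

section basics
variable {d : ℕ} [NeZero d]

noncomputable def Dtv (f g : ZMod d → ℝ) : ℝ := ∑ z, |f z - g z|

lemma Dtv_nonneg (f g : ZMod d → ℝ) : 0 ≤ Dtv f g :=
  Finset.sum_nonneg fun _ _ => abs_nonneg _

lemma Dtv_self (f : ZMod d → ℝ) : Dtv f f = 0 := by simp [Dtv]

lemma Dtv_comm (f g : ZMod d → ℝ) : Dtv f g = Dtv g f := by
  unfold Dtv; congr 1; funext z; exact abs_sub_comm _ _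

lemma Dtv_triangle (f g h : ZMod d → ℝ) : Dtv f h ≤ Dtv f g + Dtv g h := by
  unfold Dtv
  rw [← Finset.sum_add_distrib]
  exact Finset.sum_le_sum fun z _ => abs_sub_le _ _ _

lemma abs_le_Dtv (f g : ZMod d → ℝ) (x : ZMod d) : |f x - g x| ≤ Dtv f g := by
  unfold Dtv
  exact Finset.single_le_sum (f := fun z => |f z - g z|) (fun z _ => abs_nonneg _) (Finset.mem_univ x)

lemma Dtv_shift (f g : ZMod d → ℝ) :
    Dtv (fun z => f (z - 1)) (fun z => g (z - 1)) = Dtv f g := by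
  unfold Dtv
  exact Fintype.sum_equiv (Equiv.subRight (1 : ZMod d)) _ _ (fun z => rfl)

/-- Link lemma: L1 distance between the `Y`-marginal and the shifted `X`-marginal is
bounded by twice the expectation of `val (Y - X - c)`. -/
lemma link (π : ZMod d × ZMod d → ℝ) (hπ : ∀ w, 0 ≤ π w) (c : ZMod d) :
    Dtv (fun z => ∑ x, π (x, z)) (fun z => ∑ y, π (z - c, y)) ≤
      2 * ∑ w : ZMod d × ZMod d, ((w.2 - w.1 - c).val : ℝ) * π w := by
  have e1 : ∀ z : ZMod d, (∑ x, π (x, z)) =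
      ∑ w : ZMod d × ZMod d, π w * (if w.2 = z then 1 else 0) := by
    intro z
    rw [Fintype.sum_prod_type]
    simp
  have e2 : ∀ z : ZMod d, (∑ y, π (z - c, y)) =
      ∑ w : ZMod d × ZMod d, π w * (if w.1 = z - c then 1 else 0) := by
    intro z
    rw [Fintype.sum_prod_type]
    simp [Finset.sum_ite_eq, eq_comm]
  calc Dtv (fun z => ∑ x, π (x, z)) (fun z => ∑ y, π (z - c, y))
      = ∑ z, |∑ w : ZMod d × ZMod d,
          π w * ((if w.2 = z then 1 else 0) - (if w.1 = z - c then (1:ℝ) else 0))| := by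
        unfold Dtv
        congr 1; funext z
        simp only []
        rw [e1 z, e2 z, ← Finset.sum_sub_distrib]
        refine congrArg _ (Finset.sum_congr rfl fun w _ => by ring)
    _ ≤ ∑ z, ∑ w : ZMod d × ZMod d,
          π w * |(if w.2 = z then 1 else 0) - (if w.1 = z - c then (1:ℝ) else 0)| := by
        refine Finset.sum_le_sum fun z _ => ?_
        refine (Finset.abs_sum_le_sum_abs _ _).trans ?_
        refine Finset.sum_le_sum fun w _ => ?_
        rw [abs_mul, abs_of_nonneg (hπ w)]
    _ = ∑ w : ZMod d × ZMod d, ∑ z,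
          π w * |(if w.2 = z then 1 else 0) - (if w.1 = z - c then (1:ℝ) else 0)| :=
        Finset.sum_comm
    _ ≤ ∑ w : ZMod d × ZMod d, ((w.2 - w.1 - c).val : ℝ) * π w * 2 := by
        refine Finset.sum_le_sum fun w _ => ?_
        by_cases h : w.2 - w.1 - c = 0
        · have hw : w.1 = w.2 - c := by
            have : w.2 = w.1 + c := by linear_combination (norm := ring_nf) h
            rw [this]; ring
          have : ∀ z : ZMod d,
              (if w.2 = z then (1:ℝ) else 0) - (if w.1 = z - c then 1 else 0) = 0 := by
            intro z
            have : (w.1 = z - c) ↔ (w.2 = z) := by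
              constructor
              · intro hz; have : w.2 = w.1 + c := by linear_combination (norm := ring_nf) h
                rw [this, hz]; ring
              · intro hz; rw [hw, hz]
            simp [this]
          simp [this, h]
        · have h1 : (1:ℝ) ≤ ((w.2 - w.1 - c).val : ℝ) := by
            have : (w.2 - w.1 - c).val ≠ 0 := fun hc => h ((ZMod.val_eq_zero _).mp hc)
            exact_mod_cast Nat.one_le_iff_ne_zero.mpr this
          calc ∑ z, π w * |(if w.2 = z then 1 else 0) - (if w.1 = z - c then (1:ℝ) else 0)|
              ≤ ∑ z, π w * ((if w.2 = z then 1 else 0) + (if w.1 = z - c then (1:ℝ) else 0)) := by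
                refine Finset.sum_le_sum fun z _ => ?_
                refine mul_le_mul_of_nonneg_left ?_ (hπ w)
                refine (abs_sub _ _).trans ?_
                gcongr <;> [skip; skip] <;>
                  simp [abs_of_nonneg, apply_ite (|·|)] <;> positivity
            _ = π w * 2 := by
                rw [← Finset.mul_sum, Finset.sum_add_distrib]
                have hz1 : ∑ z, (if w.2 = z then (1:ℝ) else 0) = 1 := by simp
                have hz2 : ∑ z : ZMod d, (if w.1 = z - c then (1:ℝ) else 0) = 1 := by
                  have : ∀ z : ZMod d, (w.1 = z - c) ↔ (w.1 + c = z) := by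
                    intro z; constructor
                    · intro h; rw [h]; ring
                    · intro h; rw [← h]; ring
                  simp [this]
                rw [hz1, hz2]; norm_num
            _ ≤ ((w.2 - w.1 - c).val : ℝ) * π w * 2 := by nlinarith [hπ w]
    _ = 2 * ∑ w : ZMod d × ZMod d, ((w.2 - w.1 - c).val : ℝ) * π w := by
        rw [Finset.mul_sum]; congr 1; funext w; ring

lemma shift_nat (f : ZMod d → ℝ) (n : ℕ) :
    ∑ z, |f z - f (z - (n : ZMod d))| ≤ (n : ℝ) * ∑ z, |f z - f (z - 1)| := by
  induction n with
  | zero => simp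
  | succ n ih =>
      have key : ∀ z : ZMod d, |f z - f (z - ((n+1 : ℕ) : ZMod d))| ≤
          |f z - f (z - (n : ZMod d))| + |f (z - (n : ZMod d)) - f (z - (n : ZMod d) - 1)| := by
        intro z
        have : z - ((n+1 : ℕ) : ZMod d) = z - (n : ZMod d) - 1 := by
          push_cast; ring
        rw [this]
        exact abs_sub_le _ _ _
      calc ∑ z, |f z - f (z - ((n+1 : ℕ) : ZMod d))|
          ≤ ∑ z, (|f z - f (z - (n : ZMod d))| + |f (z - (n : ZMod d)) - f (z - (n : ZMod d) - 1)|) :=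
            Finset.sum_le_sum fun z _ => key z
        _ = (∑ z, |f z - f (z - (n : ZMod d))|)
            + ∑ z, |f (z - (n : ZMod d)) - f (z - (n : ZMod d) - 1)| := Finset.sum_add_distrib
        _ = (∑ z, |f z - f (z - (n : ZMod d))|) + ∑ z, |f z - f (z - 1)| := by
            congr 1
            exact Fintype.sum_equiv (Equiv.subRight ((n : ℕ) : ZMod d)) _ _ (fun z => rfl)
        _ ≤ (n : ℝ) * (∑ z, |f z - f (z - 1)|) + ∑ z, |f z - f (z - 1)| := by
            gcongr
        _ = ((n+1 : ℕ) : ℝ) * ∑ z, |f z - f (z - 1)| := by push_cast; ring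

lemma sum_val_eq (d : ℕ) [NeZero d] :
    ∑ k : ZMod d, ((k.val : ℝ)) = (d : ℝ) * ((d : ℝ) - 1) / 2 := by
  rcases d with _ | n
  · exact absurd rfl (NeZero.ne 0)
  · have h1 : ∑ k : ZMod (n+1), ((k.val : ℝ)) = ∑ i ∈ range (n+1), (i : ℝ) := by
      exact Fin.sum_univ_eq_sum_range (fun i => (i : ℝ)) (n+1)
    rw [h1]
    have h2 : ((∑ i ∈ range (n+1), i) * 2 : ℕ) = (n+1) * n := by
      rw [Finset.sum_range_id_mul_two, Nat.add_sub_cancel]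
    have h3 : ((∑ i ∈ range (n+1), i : ℕ) : ℝ) * 2 = ((n+1) : ℝ) * n := by
      exact_mod_cast congrArg (Nat.cast : ℕ → ℝ) h2
    push_cast at h3 ⊢
    linarith

lemma avg_bound (f : ZMod d → ℝ) (x : ZMod d) :
    |f x - (1 / d) * ∑ z, f z| ≤ ((d : ℝ) - 1) / 2 * ∑ z, |f z - f (z - 1)| := by
  have hd : (0 : ℝ) < d := by
    have := Nat.pos_of_ne_zero (NeZero.ne d); exact_mod_cast this
  have hcard : (Fintype.card (ZMod d) : ℝ) = d := by rw [ZMod.card]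
  have hsum : ∑ z, f z = ∑ k : ZMod d, f (x - k) :=
    (Fintype.sum_equiv (Equiv.subLeft x) _ _ (fun k => rfl)).symm
  have hfx : f x = (1 / d) * ∑ k : ZMod d, f x := by
    rw [Finset.sum_const, Finset.card_univ, nsmul_eq_mul, ZMod.card]
    field_simp
  have key : f x - (1 / d) * ∑ z, f z = (1 / d) * ∑ k : ZMod d, (f x - f (x - k)) := by
    rw [hsum, Finset.sum_sub_distrib, mul_sub, ← hfx]
  rw [key]
  have step1 : |(1 / (d:ℝ)) * ∑ k : ZMod d, (f x - f (x - k))| ≤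
      (1 / d) * ∑ k : ZMod d, |f x - f (x - k)| := by
    rw [abs_mul, abs_of_nonneg (by positivity)]
    gcongr
    exact Finset.abs_sum_le_sum_abs _ _
  refine step1.trans ?_
  have step2 : ∀ k : ZMod d, |f x - f (x - k)| ≤ (k.val : ℝ) * ∑ z, |f z - f (z - 1)| := by
    intro k
    have h1 : |f x - f (x - k)| ≤ ∑ z, |f z - f (z - k)| :=
      Finset.single_le_sum (f := fun z => |f z - f (z - k)|)
        (fun z _ => abs_nonneg _) (Finset.mem_univ x)
    have h2 := shift_nat f k.val
    rw [ZMod.natCast_rightInverse k] at h2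
    exact h1.trans h2
  calc (1 / (d:ℝ)) * ∑ k : ZMod d, |f x - f (x - k)|
      ≤ (1 / d) * ∑ k : ZMod d, (k.val : ℝ) * ∑ z, |f z - f (z - 1)| := by
        have : ∑ k : ZMod d, |f x - f (x - k)| ≤
            ∑ k : ZMod d, (k.val : ℝ) * ∑ z, |f z - f (z - 1)| :=
          Finset.sum_le_sum fun k _ => step2 k
        have h1d : (0:ℝ) ≤ 1 / d := by positivity
        exact mul_le_mul_of_nonneg_left this h1d
    _ = ((d : ℝ) - 1) / 2 * ∑ z, |f z - f (z - 1)| := by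
        rw [← Finset.sum_mul, sum_val_eq]
        field_simp

end basics

section chain
variable {d N : ℕ} [NeZero d]

noncomputable def Tt (N : ℕ) {d : ℕ} [NeZero d] (q : Fin N → Fin N → (ZMod d × ZMod d → ℝ)) (i : ℕ) : ℝ :=
  if h : i < N then expValXsubY (q ⟨i, h⟩ ⟨i, h⟩) else 0

noncomputable def Ss (N : ℕ) {d : ℕ} [NeZero d] (q : Fin N → Fin N → (ZMod d × ZMod d → ℝ)) (i : ℕ) : ℝ :=
  if h : i + 1 < N then expValYsubX (q ⟨i+1, h⟩ ⟨i, by omega⟩) else 0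

lemma chainedIN_eq (hN : 0 < N) (q : Fin N → Fin N → (ZMod d × ZMod d → ℝ)) :
    chainedIN d N hN q = (∑ i ∈ range (N-1), (Tt N q i + Ss N q i)) + Tt N q (N-1)
      + expValYsubXsubOne (q ⟨0, hN⟩ ⟨N-1, by omega⟩) := by
  unfold chainedIN
  congr 1
  congr 1
  · rw [← Finset.sum_attach (range (N-1)) (fun i => Tt N q i + Ss N q i)]
    refine Finset.sum_congr rfl fun i _ => ?_
    have h1 : i.1 < N := by have := Finset.mem_range.mp i.2; omega
    have h2 : i.1 + 1 < N := by have := Finset.mem_range.mp i.2; omega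
    simp only [Tt, Ss, dif_pos h1, dif_pos h2]
  · simp only [Tt, dif_pos (show N - 1 < N by omega)]

lemma chain_bounds (hN : 0 < N) (q : Fin N → Fin N → (ZMod d × ZMod d → ℝ))
    (hq : ∀ a b w, 0 ≤ q a b w)
    (hA : ∀ a b b' x, (∑ y, q a b (x, y)) = ∑ y, q a b' (x, y))
    (hB : ∀ a a' b y, (∑ x, q a b (x, y)) = ∑ x, q a' b (x, y)) :
    (∀ a : Fin N, Dtv (fun z => ∑ y, q a ⟨0, hN⟩ (z, y))
        (fun z => ∑ y, q a ⟨0, hN⟩ (z - 1, y)) ≤ 2 * chainedIN d N hN q) ∧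
    (∀ b : Fin N, Dtv (fun z => ∑ x, q ⟨0, hN⟩ b (x, z))
        (fun z => ∑ x, q ⟨0, hN⟩ b (x, z - 1)) ≤ 2 * chainedIN d N hN q) := by
  set b0 : Fin N := ⟨0, hN⟩ with hb0
  set bN : Fin N := ⟨N - 1, by omega⟩ with hbN
  set μ : Fin N → ZMod d → ℝ := fun a z => ∑ y, q a b0 (z, y) with hμ
  set ν : Fin N → ZMod d → ℝ := fun b z => ∑ x, q b0 b (x, z) with hν
  set σμ0 : ZMod d → ℝ := fun z => μ b0 (z - 1) with hσμ0
  set W : ℝ := expValYsubXsubOne (q b0 bN) with hWdef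
  -- link inequalities
  have hYX : ∀ a b : Fin N, Dtv (ν b) (μ a) ≤ 2 * expValYsubX (q a b) := by
    intro a b
    have h := link (q a b) (hq a b) 0
    have e1 : (fun z => ∑ x, q a b (x, z)) = ν b := by
      funext z; exact hB a b0 b z
    have e2 : (fun z : ZMod d => ∑ y, q a b (z - 0, y)) = μ a := by
      funext z; rw [sub_zero]; exact hA a b b0 z
    rw [e1, e2] at h
    refine h.trans (le_of_eq ?_)
    unfold expValYsubX
    congr 1
    exact Finset.sum_congr rfl fun w _ => by rw [sub_zero]
  have hXY : ∀ a b : Fin N, Dtv (μ a) (ν b) ≤ 2 * expValXsubY (q a b) := by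
    intro a b
    have h := link (fun w => q a b (w.2, w.1)) (fun w => hq a b _) 0
    have e1 : (fun z => ∑ x : ZMod d, q a b (z, x)) = μ a := by
      funext z; exact hA a b b0 z
    have e2 : (fun z : ZMod d => ∑ y : ZMod d, q a b (y, z - 0)) = ν b := by
      funext z; rw [sub_zero]; exact hB a b0 b z
    simp only [] at h
    rw [e1, e2] at h
    refine h.trans (le_of_eq ?_)
    unfold expValXsubY
    congr 1
    refine Fintype.sum_equiv (Equiv.prodComm _ _) _ _ (fun w => ?_)
    rw [sub_zero]
    rfl
  have hW : Dtv (ν bN) σμ0 ≤ 2 * W := by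
    have h := link (q b0 bN) (hq b0 bN) 1
    have e1 : (fun z => ∑ x, q b0 bN (x, z)) = ν bN := rfl
    have e2 : (fun z : ZMod d => ∑ y, q b0 bN (z - 1, y)) = σμ0 := by
      funext z; exact hA b0 bN b0 (z - 1)
    rw [e1, e2] at h
    exact h
  -- left chain
  have left : ∀ j : ℕ, ∀ hj : j < N,
      Dtv (μ b0) (μ ⟨j, hj⟩) ≤ 2 * ∑ i ∈ range j, (Tt N q i + Ss N q i) := by
    intro j
    induction j with
    | zero => intro hj; simp [Dtv_self, hb0]
    | succ n ih =>
        intro hj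
        have hn : n < N := by omega
        have t1 : Dtv (μ ⟨n, hn⟩) (ν ⟨n, hn⟩) ≤ 2 * Tt N q n := by
          rw [Tt, dif_pos hn]; exact hXY _ _
        have t2 : Dtv (ν ⟨n, hn⟩) (μ ⟨n+1, hj⟩) ≤ 2 * Ss N q n := by
          rw [Ss, dif_pos hj]; exact hYX _ _
        calc Dtv (μ b0) (μ ⟨n+1, hj⟩)
            ≤ Dtv (μ b0) (μ ⟨n, hn⟩) + Dtv (μ ⟨n, hn⟩) (μ ⟨n+1, hj⟩) := Dtv_triangle _ _ _
          _ ≤ Dtv (μ b0) (μ ⟨n, hn⟩) +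
              (Dtv (μ ⟨n, hn⟩) (ν ⟨n, hn⟩) + Dtv (ν ⟨n, hn⟩) (μ ⟨n+1, hj⟩)) := by
                have := Dtv_triangle (μ ⟨n, hn⟩) (ν ⟨n, hn⟩) (μ ⟨n+1, hj⟩)
                linarith
          _ ≤ 2 * ∑ i ∈ range n, (Tt N q i + Ss N q i) + (2 * Tt N q n + 2 * Ss N q n) := by
                have := ih hn
                linarith
          _ = 2 * ∑ i ∈ range (n+1), (Tt N q i + Ss N q i) := by
                rw [Finset.sum_range_succ]; ring
  -- right chain
  have right : ∀ k j : ℕ, j + k = N - 1 → ∀ hj : j < N,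
      Dtv (μ ⟨j, hj⟩) σμ0 ≤
        2 * ((∑ i ∈ Finset.Ico j (N-1), (Tt N q i + Ss N q i)) + Tt N q (N-1) + W) := by
    intro k
    induction k with
    | zero =>
        intro j hjk hj
        have hje : j = N - 1 := by omega
        subst hje
        have hTN : Dtv (μ ⟨N-1, hj⟩) (ν bN) ≤ 2 * Tt N q (N-1) := by
          rw [Tt, dif_pos (show N - 1 < N by omega)]
          exact hXY _ _
        have := Dtv_triangle (μ ⟨N-1, hj⟩) (ν bN) σμ0
        rw [Finset.Ico_self, Finset.sum_empty]
        linarith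
    | succ k ih =>
        intro j hjk hj
        have hj1 : j + 1 < N := by omega
        have h2 := ih (j+1) (by omega) hj1
        have hlt : j < N - 1 := by omega
        have t1 : Dtv (μ ⟨j, hj⟩) (ν ⟨j, hj⟩) ≤ 2 * Tt N q j := by
          rw [Tt, dif_pos hj]; exact hXY _ _
        have t2 : Dtv (ν ⟨j, hj⟩) (μ ⟨j+1, hj1⟩) ≤ 2 * Ss N q j := by
          rw [Ss, dif_pos hj1]; exact hYX _ _
        have tri1 := Dtv_triangle (μ ⟨j, hj⟩) (ν ⟨j, hj⟩) σμ0
        have tri2 := Dtv_triangle (ν ⟨j, hj⟩) (μ ⟨j+1, hj1⟩) σμ0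
        have hsum : ∑ i ∈ Finset.Ico j (N-1), (Tt N q i + Ss N q i) =
            (Tt N q j + Ss N q j) + ∑ i ∈ Finset.Ico (j+1) (N-1), (Tt N q i + Ss N q i) :=
          Finset.sum_eq_sum_Ico_succ_bot hlt _
        rw [hsum]
        linarith
  refine ⟨?_, ?_⟩
  · intro a
    have ha : a = ⟨a.1, a.2⟩ := rfl
    have h1 : Dtv (μ a) σμ0 ≤
        2 * ((∑ i ∈ Finset.Ico a.1 (N-1), (Tt N q i + Ss N q i)) + Tt N q (N-1) + W) := by
      rw [ha]; exact right (N - 1 - a.1) a.1 (by omega) a.2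
    have h2 : Dtv σμ0 (fun z => μ a (z - 1)) ≤ 2 * ∑ i ∈ range a.1, (Tt N q i + Ss N q i) := by
      have : Dtv σμ0 (fun z => μ a (z - 1)) = Dtv (μ b0) (μ a) := Dtv_shift _ _
      rw [this, ha]
      exact left a.1 a.2
    have tri := Dtv_triangle (μ a) σμ0 (fun z => μ a (z - 1))
    have hsplit : (∑ i ∈ range a.1, (Tt N q i + Ss N q i)) +
        ∑ i ∈ Finset.Ico a.1 (N-1), (Tt N q i + Ss N q i) =
        ∑ i ∈ range (N-1), (Tt N q i + Ss N q i) := by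
      rw [Finset.range_eq_Ico, Finset.range_eq_Ico]
      exact Finset.sum_Ico_consecutive _ (Nat.zero_le _) (by omega)
    have hC := chainedIN_eq hN q
    show Dtv (μ a) (fun z => μ a (z - 1)) ≤ 2 * chainedIN d N hN q
    rw [hC]
    linarith
  · intro b
    have hb : b = ⟨b.1, b.2⟩ := rfl
    -- Dtv (μ b0) (ν b)
    have hLb : Dtv (μ b0) (ν b) ≤
        2 * ((∑ i ∈ range b.1, (Tt N q i + Ss N q i)) + Tt N q b.1) := by
      have t1 : Dtv (μ b) (ν b) ≤ 2 * Tt N q b.1 := by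
        rw [Tt, dif_pos b.2]
        rw [hb]; exact hXY _ _
      have tri := Dtv_triangle (μ b0) (μ b) (ν b)
      have hl : Dtv (μ b0) (μ b) ≤ 2 * ∑ i ∈ range b.1, (Tt N q i + Ss N q i) := by
        rw [hb]; exact left b.1 b.2
      linarith
    -- Dtv (ν b) σμ0
    have hRb : Dtv (ν b) σμ0 ≤
        2 * ((∑ i ∈ Finset.Ico b.1 (N-1), (Tt N q i + Ss N q i)) + Tt N q (N-1) + W)
          - 2 * Tt N q b.1 := by
      by_cases hbn : b.1 = N - 1
      · have hbb : b = bN := Fin.ext (by simpa using hbn)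
        rw [hbb]
        have hv : (bN : ℕ) = N - 1 := rfl
        rw [hv, Finset.Ico_self, Finset.sum_empty]
        have := hW
        linarith
      · have hlt : b.1 < N - 1 := by omega
        have hj1 : b.1 + 1 < N := by omega
        have t2 : Dtv (ν b) (μ ⟨b.1 + 1, hj1⟩) ≤ 2 * Ss N q b.1 := by
          rw [Ss, dif_pos hj1]
          exact hYX ⟨b.1 + 1, hj1⟩ b
        have hr := right (N - 1 - (b.1 + 1)) (b.1 + 1) (by omega) hj1
        have tri := Dtv_triangle (ν b) (μ ⟨b.1 + 1, hj1⟩) σμ0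
        have hsum : ∑ i ∈ Finset.Ico b.1 (N-1), (Tt N q i + Ss N q i) =
            (Tt N q b.1 + Ss N q b.1) + ∑ i ∈ Finset.Ico (b.1+1) (N-1), (Tt N q i + Ss N q i) :=
          Finset.sum_eq_sum_Ico_succ_bot hlt _
        rw [hsum]
        linarith
    have tri := Dtv_triangle (ν b) σμ0 (fun z => ν b (z - 1))
    have hshift : Dtv σμ0 (fun z => ν b (z - 1)) = Dtv (μ b0) (ν b) := Dtv_shift _ _
    have hsplit : (∑ i ∈ range b.1, (Tt N q i + Ss N q i)) +
        ∑ i ∈ Finset.Ico b.1 (N-1), (Tt N q i + Ss N q i) =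
        ∑ i ∈ range (N-1), (Tt N q i + Ss N q i) := by
      rw [Finset.range_eq_Ico, Finset.range_eq_Ico]
      exact Finset.sum_Ico_consecutive _ (Nat.zero_le _) (by omega)
    have hC := chainedIN_eq hN q
    show Dtv (ν b) (fun z => ν b (z - 1)) ≤ 2 * chainedIN d N hN q
    rw [hC]
    linarith


lemma keyX (hN : 0 < N) (q : Fin N → Fin N → (ZMod d × ZMod d → ℝ))
    (hq : ∀ a b w, 0 ≤ q a b w)
    (hA : ∀ a b b' x, (∑ y, q a b (x, y)) = ∑ y, q a b' (x, y))
    (hB : ∀ a a' b y, (∑ x, q a b (x, y)) = ∑ x, q a' b (x, y))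
    (a b : Fin N) (x : ZMod d) :
    |(∑ y, q a b (x, y)) - (1 / d) * ∑ x', ∑ y, q a b (x', y)| ≤
      ((d : ℝ) - 1) * chainedIN d N hN q := by
  set b0 : Fin N := ⟨0, hN⟩ with hb0
  set f : ZMod d → ℝ := fun z => ∑ y, q a b0 (z, y) with hf
  have h1 : (∑ y, q a b (x, y)) = f x := hA a b b0 x
  have h2 : (∑ x', ∑ y, q a b (x', y)) = ∑ z, f z :=
    Finset.sum_congr rfl fun x' _ => hA a b b0 x'
  rw [h1, h2]
  have h3 := avg_bound f x
  have h5 : ∑ z, |f z - f (z - 1)| ≤ 2 * chainedIN d N hN q :=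
    (chain_bounds hN q hq hA hB).1 a
  have hd1 : (1 : ℝ) ≤ d := by
    have := Nat.pos_of_ne_zero (NeZero.ne d); exact_mod_cast this
  calc |f x - (1 / d) * ∑ z, f z|
      ≤ ((d : ℝ) - 1) / 2 * ∑ z, |f z - f (z - 1)| := h3
    _ ≤ ((d : ℝ) - 1) / 2 * (2 * chainedIN d N hN q) := by
        have hc : (0:ℝ) ≤ ((d : ℝ) - 1) / 2 := by linarith
        exact mul_le_mul_of_nonneg_left h5 hc
    _ = ((d : ℝ) - 1) * chainedIN d N hN q := by ring

lemma keyY (hN : 0 < N) (q : Fin N → Fin N → (ZMod d × ZMod d → ℝ))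
    (hq : ∀ a b w, 0 ≤ q a b w)
    (hA : ∀ a b b' x, (∑ y, q a b (x, y)) = ∑ y, q a b' (x, y))
    (hB : ∀ a a' b y, (∑ x, q a b (x, y)) = ∑ x, q a' b (x, y))
    (a b : Fin N) (y : ZMod d) :
    |(∑ x, q a b (x, y)) - (1 / d) * ∑ y', ∑ x, q a b (x, y')| ≤
      ((d : ℝ) - 1) * chainedIN d N hN q := by
  set b0 : Fin N := ⟨0, hN⟩ with hb0
  set f : ZMod d → ℝ := fun z => ∑ x, q b0 b (x, z) with hf
  have h1 : (∑ x, q a b (x, y)) = f y := hB a b0 b y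
  have h2 : (∑ y', ∑ x, q a b (x, y')) = ∑ z, f z :=
    Finset.sum_congr rfl fun y' _ => hB a b0 b y'
  rw [h1, h2]
  have h3 := avg_bound f y
  have h5 : ∑ z, |f z - f (z - 1)| ≤ 2 * chainedIN d N hN q :=
    (chain_bounds hN q hq hA hB).2 b
  have hd1 : (1 : ℝ) ≤ d := by
    have := Nat.pos_of_ne_zero (NeZero.ne d); exact_mod_cast this
  calc |f y - (1 / d) * ∑ z, f z|
      ≤ ((d : ℝ) - 1) / 2 * ∑ z, |f z - f (z - 1)| := h3
    _ ≤ ((d : ℝ) - 1) / 2 * (2 * chainedIN d N hN q) := by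
        have hc : (0:ℝ) ≤ ((d : ℝ) - 1) / 2 := by linarith
        exact mul_le_mul_of_nonneg_left h5 hc
    _ = ((d : ℝ) - 1) * chainedIN d N hN q := by ring

lemma expValXsubY_sum {ι : Type*} (s : Finset ι) (π : ι → ZMod d × ZMod d → ℝ) :
    expValXsubY (fun w => ∑ u ∈ s, π u w) = ∑ u ∈ s, expValXsubY (π u) := by
  unfold expValXsubY
  simp only [Finset.mul_sum]
  exact Finset.sum_comm

lemma expValYsubX_sum {ι : Type*} (s : Finset ι) (π : ι → ZMod d × ZMod d → ℝ) :
    expValYsubX (fun w => ∑ u ∈ s, π u w) = ∑ u ∈ s, expValYsubX (π u) := by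
  unfold expValYsubX
  simp only [Finset.mul_sum]
  exact Finset.sum_comm

lemma expValYsubXsubOne_sum {ι : Type*} (s : Finset ι) (π : ι → ZMod d × ZMod d → ℝ) :
    expValYsubXsubOne (fun w => ∑ u ∈ s, π u w) = ∑ u ∈ s, expValYsubXsubOne (π u) := by
  unfold expValYsubXsubOne
  simp only [Finset.mul_sum]
  exact Finset.sum_comm

lemma chainedIN_sum (hN : 0 < N) {ι : Type*} (s : Finset ι)
    (q : ι → Fin N → Fin N → (ZMod d × ZMod d → ℝ)) :
    chainedIN d N hN (fun a b w => ∑ u ∈ s, q u a b w) =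
      ∑ u ∈ s, chainedIN d N hN (q u) := by
  unfold chainedIN
  rw [expValXsubY_sum s, expValYsubXsubOne_sum s]
  have hmid : ∀ i ∈ (Finset.range (N - 1)).attach,
      (expValXsubY (fun w => ∑ u ∈ s, q u ⟨i.1, by have := Finset.mem_range.mp i.2; omega⟩
          ⟨i.1, by have := Finset.mem_range.mp i.2; omega⟩ w) +
       expValYsubX (fun w => ∑ u ∈ s, q u ⟨i.1 + 1, by have := Finset.mem_range.mp i.2; omega⟩
          ⟨i.1, by have := Finset.mem_range.mp i.2; omega⟩ w)) =
      ∑ u ∈ s,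
        (expValXsubY (q u ⟨i.1, by have := Finset.mem_range.mp i.2; omega⟩
          ⟨i.1, by have := Finset.mem_range.mp i.2; omega⟩) +
         expValYsubX (q u ⟨i.1 + 1, by have := Finset.mem_range.mp i.2; omega⟩
          ⟨i.1, by have := Finset.mem_range.mp i.2; omega⟩)) := by
    intro i _
    rw [expValXsubY_sum s, expValYsubX_sum s, Finset.sum_add_distrib]
  rw [Finset.sum_congr rfl hmid, Finset.sum_comm]
  rw [← Finset.sum_add_distrib, ← Finset.sum_add_distrib]

lemma expValXsubY_nonneg (π : ZMod d × ZMod d → ℝ) (hπ : ∀ w, 0 ≤ π w) :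
    0 ≤ expValXsubY π :=
  Finset.sum_nonneg fun w _ => mul_nonneg (by positivity) (hπ w)

lemma expValYsubX_nonneg (π : ZMod d × ZMod d → ℝ) (hπ : ∀ w, 0 ≤ π w) :
    0 ≤ expValYsubX π :=
  Finset.sum_nonneg fun w _ => mul_nonneg (by positivity) (hπ w)

lemma expValYsubXsubOne_nonneg (π : ZMod d × ZMod d → ℝ) (hπ : ∀ w, 0 ≤ π w) :
    0 ≤ expValYsubXsubOne π :=
  Finset.sum_nonneg fun w _ => mul_nonneg (by positivity) (hπ w)

lemma chainedIN_nonneg (hN : 0 < N) (q : Fin N → Fin N → (ZMod d × ZMod d → ℝ))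
    (hq : ∀ a b w, 0 ≤ q a b w) : 0 ≤ chainedIN d N hN q := by
  unfold chainedIN
  refine add_nonneg (add_nonneg ?_ ?_) ?_
  · refine Finset.sum_nonneg fun i _ => add_nonneg ?_ ?_
    · exact expValXsubY_nonneg _ (hq _ _)
    · exact expValYsubX_nonneg _ (hq _ _)
  · exact expValXsubY_nonneg _ (hq _ _)
  · exact expValYsubXsubOne_nonneg _ (hq _ _)

end chain

/-- Inequalities (8) and (9) of the paper: in any hidden-variable model whose local variables
`U, V` satisfy the no-signaling conditions, the dependence of each outcome on its local hidden
variable, measured by `(4/d)·Δ(P_{XU|a}, uniform × P_U)` (resp. with `Y, V, b`), is bounded by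
the chained correlation quantity `I_N` of the `(X,Y)`-marginals. -/
theorem local_hidden_variable_bound (d N : ℕ) [NeZero d] (hN : 0 < N)
    (U V : Type) [Fintype U] [Fintype V] [Nonempty U] [Nonempty V]
    (p : Fin N → Fin N → (ZMod d × ZMod d × U × V → ℝ))
    (hnonneg : ∀ a b w, 0 ≤ p a b w)
    (hsum : ∀ a b, ∑ w, p a b w = 1)
    -- (i) the (X,U,V)-marginal does not depend on b
    (hXUV : ∀ a b b' x u v, ∑ y, p a b (x, y, u, v) = ∑ y, p a b' (x, y, u, v))
    -- (ii) the (Y,U,V)-marginal does not depend on a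
    (hYUV : ∀ a a' b y u v, ∑ x, p a b (x, y, u, v) = ∑ x, p a' b (x, y, u, v)) :
    (∀ (a b : Fin N) (x : ZMod d),
      (4 / d) * ((1 / d) * ∑ u : U,
          |(∑ y : ZMod d, ∑ v : V, p a b (x, y, u, v)) -
            (1 / d) * (∑ x' : ZMod d, ∑ y : ZMod d, ∑ v : V, p a b (x', y, u, v))|) ≤
        chainedIN d N hN (fun a' b' w => ∑ u : U, ∑ v : V, p a' b' (w.1, w.2, u, v))) ∧
    (∀ (a b : Fin N) (y : ZMod d),
      (4 / d) * ((1 / d) * ∑ v : V,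
          |(∑ x : ZMod d, ∑ u : U, p a b (x, y, u, v)) -
            (1 / d) * (∑ y' : ZMod d, ∑ x : ZMod d, ∑ u : U, p a b (x, y', u, v))|) ≤
        chainedIN d N hN (fun a' b' w => ∑ u : U, ∑ v : V, p a' b' (w.1, w.2, u, v))) := by
  have hd0 : (0 : ℝ) < d := by
    have := Nat.pos_of_ne_zero (NeZero.ne d); exact_mod_cast this
  have hd1 : (1 : ℝ) ≤ d := by
    have := Nat.pos_of_ne_zero (NeZero.ne d); exact_mod_cast this
  set Q : Fin N → Fin N → (ZMod d × ZMod d → ℝ) :=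
    fun a' b' w => ∑ u : U, ∑ v : V, p a' b' (w.1, w.2, u, v) with hQ
  have hQnonneg : ∀ a b w, 0 ≤ Q a b w := fun a b w =>
    Finset.sum_nonneg fun u _ => Finset.sum_nonneg fun v _ => hnonneg a b _
  have hI0 : 0 ≤ chainedIN d N hN Q := chainedIN_nonneg hN Q hQnonneg
  constructor
  · intro a b x
    set qf : U → Fin N → Fin N → (ZMod d × ZMod d → ℝ) :=
      fun u a' b' w => ∑ v : V, p a' b' (w.1, w.2, u, v) with hqf
    have hq : ∀ u a' b' w, 0 ≤ qf u a' b' w := fun u a' b' w =>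
      Finset.sum_nonneg fun v _ => hnonneg a' b' _
    have hAq : ∀ u a' b b' x', (∑ y, qf u a' b (x', y)) = ∑ y, qf u a' b' (x', y) := by
      intro u a' bb bb' x'
      show (∑ y, ∑ v, p a' bb (x', y, u, v)) = ∑ y, ∑ v, p a' bb' (x', y, u, v)
      calc (∑ y, ∑ v, p a' bb (x', y, u, v)) = ∑ v, ∑ y, p a' bb (x', y, u, v) :=
            Finset.sum_comm
        _ = ∑ v, ∑ y, p a' bb' (x', y, u, v) :=
            Finset.sum_congr rfl fun v _ => hXUV a' bb bb' x' u v
        _ = ∑ y, ∑ v, p a' bb' (x', y, u, v) := Finset.sum_comm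
    have hBq : ∀ u a' a'' b' y', (∑ x', qf u a' b' (x', y')) = ∑ x', qf u a'' b' (x', y') := by
      intro u a' a'' b' y'
      show (∑ x', ∑ v, p a' b' (x', y', u, v)) = ∑ x', ∑ v, p a'' b' (x', y', u, v)
      calc (∑ x', ∑ v, p a' b' (x', y', u, v)) = ∑ v, ∑ x', p a' b' (x', y', u, v) :=
            Finset.sum_comm
        _ = ∑ v, ∑ x', p a'' b' (x', y', u, v) :=
            Finset.sum_congr rfl fun v _ => hYUV a' a'' b' y' u v
        _ = ∑ x', ∑ v, p a'' b' (x', y', u, v) := Finset.sum_comm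
    have hkey : ∀ u : U,
        |(∑ y : ZMod d, ∑ v : V, p a b (x, y, u, v)) -
            (1 / d) * (∑ x' : ZMod d, ∑ y : ZMod d, ∑ v : V, p a b (x', y, u, v))| ≤
          ((d : ℝ) - 1) * chainedIN d N hN (qf u) := fun u =>
      keyX hN (qf u) (hq u) (hAq u) (hBq u) a b x
    have hSsum : (∑ u : U, |(∑ y : ZMod d, ∑ v : V, p a b (x, y, u, v)) -
            (1 / d) * (∑ x' : ZMod d, ∑ y : ZMod d, ∑ v : V, p a b (x', y, u, v))|) ≤
        ((d : ℝ) - 1) * chainedIN d N hN Q := by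
      have h1 : (∑ u : U, |(∑ y : ZMod d, ∑ v : V, p a b (x, y, u, v)) -
            (1 / d) * (∑ x' : ZMod d, ∑ y : ZMod d, ∑ v : V, p a b (x', y, u, v))|) ≤
          ∑ u : U, ((d : ℝ) - 1) * chainedIN d N hN (qf u) :=
        Finset.sum_le_sum fun u _ => hkey u
      rw [← Finset.mul_sum] at h1
      have h2 : (∑ u : U, chainedIN d N hN (qf u)) = chainedIN d N hN Q := by
        rw [← chainedIN_sum hN univ qf]
      rw [h2] at h1
      exact h1
    set S : ℝ := ∑ u : U, |(∑ y : ZMod d, ∑ v : V, p a b (x, y, u, v)) -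
            (1 / d) * (∑ x' : ZMod d, ∑ y : ZMod d, ∑ v : V, p a b (x', y, u, v))| with hS
    have hS0 : 0 ≤ S := Finset.sum_nonneg fun u _ => abs_nonneg _
    have heq : (4 / (d:ℝ)) * ((1 / d) * S) = 4 * S / ((d:ℝ) * d) := by
      field_simp
    rw [heq, div_le_iff₀ (by positivity)]
    nlinarith [mul_nonneg hI0 (sq_nonneg ((d:ℝ) - 2))]
  · intro a b y
    set qf : V → Fin N → Fin N → (ZMod d × ZMod d → ℝ) :=
      fun v a' b' w => ∑ u : U, p a' b' (w.1, w.2, u, v) with hqf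
    have hq : ∀ v a' b' w, 0 ≤ qf v a' b' w := fun v a' b' w =>
      Finset.sum_nonneg fun u _ => hnonneg a' b' _
    have hAq : ∀ v a' b b' x', (∑ y', qf v a' b (x', y')) = ∑ y', qf v a' b' (x', y') := by
      intro v a' bb bb' x'
      show (∑ y', ∑ u, p a' bb (x', y', u, v)) = ∑ y', ∑ u, p a' bb' (x', y', u, v)
      calc (∑ y', ∑ u, p a' bb (x', y', u, v)) = ∑ u, ∑ y', p a' bb (x', y', u, v) :=
            Finset.sum_comm
        _ = ∑ u, ∑ y', p a' bb' (x', y', u, v) :=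
            Finset.sum_congr rfl fun u _ => hXUV a' bb bb' x' u v
        _ = ∑ y', ∑ u, p a' bb' (x', y', u, v) := Finset.sum_comm
    have hBq : ∀ v a' a'' b' y', (∑ x', qf v a' b' (x', y')) = ∑ x', qf v a'' b' (x', y') := by
      intro v a' a'' b' y'
      show (∑ x', ∑ u, p a' b' (x', y', u, v)) = ∑ x', ∑ u, p a'' b' (x', y', u, v)
      calc (∑ x', ∑ u, p a' b' (x', y', u, v)) = ∑ u, ∑ x', p a' b' (x', y', u, v) :=
            Finset.sum_comm
        _ = ∑ u, ∑ x', p a'' b' (x', y', u, v) :=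
            Finset.sum_congr rfl fun u _ => hYUV a' a'' b' y' u v
        _ = ∑ x', ∑ u, p a'' b' (x', y', u, v) := Finset.sum_comm
    have hQcomm : Q = fun a' b' w => ∑ v : V, ∑ u : U, p a' b' (w.1, w.2, u, v) := by
      funext a' b' w
      exact Finset.sum_comm
    have hkey : ∀ v : V,
        |(∑ x : ZMod d, ∑ u : U, p a b (x, y, u, v)) -
            (1 / d) * (∑ y' : ZMod d, ∑ x : ZMod d, ∑ u : U, p a b (x, y', u, v))| ≤
          ((d : ℝ) - 1) * chainedIN d N hN (qf v) := fun v =>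
      keyY hN (qf v) (hq v) (hAq v) (hBq v) a b y
    have hSsum : (∑ v : V, |(∑ x : ZMod d, ∑ u : U, p a b (x, y, u, v)) -
            (1 / d) * (∑ y' : ZMod d, ∑ x : ZMod d, ∑ u : U, p a b (x, y', u, v))|) ≤
        ((d : ℝ) - 1) * chainedIN d N hN Q := by
      have h1 : (∑ v : V, |(∑ x : ZMod d, ∑ u : U, p a b (x, y, u, v)) -
            (1 / d) * (∑ y' : ZMod d, ∑ x : ZMod d, ∑ u : U, p a b (x, y', u, v))|) ≤
          ∑ v : V, ((d : ℝ) - 1) * chainedIN d N hN (qf v) :=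
        Finset.sum_le_sum fun v _ => hkey v
      rw [← Finset.mul_sum] at h1
      have h2 : (∑ v : V, chainedIN d N hN (qf v)) = chainedIN d N hN Q := by
        rw [← chainedIN_sum hN univ qf, hQcomm]
      rw [h2] at h1
      exact h1
    set S : ℝ := ∑ v : V, |(∑ x : ZMod d, ∑ u : U, p a b (x, y, u, v)) -
            (1 / d) * (∑ y' : ZMod d, ∑ x : ZMod d, ∑ u : U, p a b (x, y', u, v))| with hS
    have hS0 : 0 ≤ S := Finset.sum_nonneg fun v _ => abs_nonneg _
    have heq : (4 / (d:ℝ)) * ((1 / d) * S) = 4 * S / ((d:ℝ) * d) := by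
      field_simp
    rw [heq, div_le_iff₀ (by positivity)]
    nlinarith [mul_nonneg hI0 (sq_nonneg ((d:ℝ) - 2))]
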